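/- arXiv:2002.08175 — 2 statements merged into one kernel-verified Lean document; each statement's English description precedes it below -/
import Mathlib

section
/- If a finite family of intervals {[d1_i, d2_i]}_{i∈I} is reachable, then for every fixed index k ∈ I and every value q with d1_k ≤ q ≤ d2_k there exist probabilities p_i ∈ [d1_i, d2_i] for i ≠ k such that q + ∑_{i≠k} p_i = 1. -/
open Finset

/-- If a finite family of intervals is reachable, then for every index `k` and
every `q ∈ [d1 k, d2 k]` there are values `p i ∈ [d1 i, d2 i]` for `i ≠ k`
with `q + ∑_{i ≠ k} p i = 1`. -/
theorem reachable_complete_to_one {I : Type*} [Fintype I] [DecidableEq I] [Nonempty I]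
    (d1 d2 : I → ℝ)
    (hbounds : ∀ i, 0 ≤ d1 i ∧ d1 i ≤ d2 i ∧ d2 i ≤ 1)
    (hreach : ∀ i, (∑ j ∈ Finset.univ.erase i, d1 j) + d2 i ≤ 1 ∧
                   1 ≤ (∑ j ∈ Finset.univ.erase i, d2 j) + d1 i)
    (k : I) (q : ℝ) (hq1 : d1 k ≤ q) (hq2 : q ≤ d2 k) :
    ∃ p : I → ℝ, (∀ i, i ≠ k → d1 i ≤ p i ∧ p i ≤ d2 i) ∧
      q + ∑ i ∈ Finset.univ.erase k, p i = 1 := by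
  set A := ∑ j ∈ Finset.univ.erase k, d1 j with hA
  set B := ∑ j ∈ Finset.univ.erase k, d2 j with hB
  have hAB : A ≤ B := Finset.sum_le_sum fun i _ => (hbounds i).2.1
  have hAS : A ≤ 1 - q := by linarith [(hreach k).1]
  have hSB : 1 - q ≤ B := by linarith [(hreach k).2]
  rcases eq_or_lt_of_le hAB with h | h
  · refine ⟨d1, fun i _ => ⟨le_refl _, (hbounds i).2.1⟩, ?_⟩
    have : A = 1 - q := le_antisymm hAS (by linarith)
    rw [← hA]; linarith
  · set t := (1 - q - A) / (B - A) with ht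
    have ht0 : 0 ≤ t := div_nonneg (by linarith) (by linarith)
    have ht1 : t ≤ 1 := by
      rw [ht, div_le_one (by linarith)]; linarith
    refine ⟨fun i => (1 - t) * d1 i + t * d2 i, fun i _ => ?_, ?_⟩
    · have hd := (hbounds i).2.1
      simp only
      constructor <;> nlinarith
    · have hsum : ∑ i ∈ Finset.univ.erase k, ((1 - t) * d1 i + t * d2 i)
          = (1 - t) * A + t * B := by
        rw [Finset.sum_add_distrib, ← Finset.mul_sum, ← Finset.mul_sum]
      rw [hsum]
      have : t * (B - A) = 1 - q - A := by
        rw [ht, div_mul_cancel₀ _ (by linarith : B - A ≠ 0)]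
      nlinarith
end

section
/- Reachability of a family of intervals is equivalent to: for every k ∈ I and every q ∈ [d1_k, d2_k], the value 1 − q lies between ∑_{j≠k} d1_j and ∑_{j≠k} d2_j. -/
open Finset

/-- Reachability of a family of intervals is equivalent to: for every `k` and
every `q ∈ [d1 k, d2 k]`, the value `1 - q` lies between `∑_{j ≠ k} d1 j`
and `∑_{j ≠ k} d2 j`. -/
theorem reachable_iff_complement {I : Type*} [Fintype I] [DecidableEq I] [Nonempty I]
    (d1 d2 : I → ℝ)
    (hbounds : ∀ i, 0 ≤ d1 i ∧ d1 i ≤ d2 i ∧ d2 i ≤ 1) :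
    (∀ i, (∑ j ∈ Finset.univ.erase i, d1 j) + d2 i ≤ 1 ∧
          1 ≤ (∑ j ∈ Finset.univ.erase i, d2 j) + d1 i) ↔
    (∀ k, ∀ q : ℝ, d1 k ≤ q → q ≤ d2 k →
      (∑ j ∈ Finset.univ.erase k, d1 j) ≤ 1 - q ∧
      1 - q ≤ ∑ j ∈ Finset.univ.erase k, d2 j) := by
  constructor
  · intro h k q hq1 hq2
    obtain ⟨h1, h2⟩ := h k
    constructor <;> linarith
  · intro h i
    obtain ⟨h1, h2⟩ := h i (d2 i) (hbounds i).2.1 le_rfl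
    obtain ⟨h3, h4⟩ := h i (d1 i) le_rfl (hbounds i).2.1
    constructor <;> linarith
end
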